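/- For 0 < r < 1, c ∈ [−1/r, 1/r], and |z| sufficiently small real, the moment generating function of μ(r,c), M(z) = Σ_{n≥0} s_n(μ(r,c)) z^n, equals ((1−r²z²)(1+cz) − (z+c)z√(1−r²)√(1−r²z²)) / ((1−z²)(1−r²z²)). -/

import Mathlib

open Real MeasureTheory intervalIntegral


lemma intInt_inv_sqrt {r : ℝ} (hr : 0 < r) :
    IntervalIntegrable (fun x => (Real.sqrt (r^2 - x^2))⁻¹) volume (-r) r := by
  have hmeas : ∀ a b : ℝ, AEStronglyMeasurable (fun x : ℝ => (Real.sqrt (r^2 - x^2))⁻¹)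
      (volume.restrict (Set.uIoc a b)) := by
    intro a b
    exact ((Real.continuous_sqrt.comp (by continuity)).measurable.inv).aestronglyMeasurable
  have base : IntervalIntegrable (fun x : ℝ => x ^ (-(1:ℝ)/2)) volume 0 r :=
    intervalIntegrable_rpow' (by norm_num)
  have comp : IntervalIntegrable (fun x : ℝ => (r - x) ^ (-(1:ℝ)/2)) volume 0 r := by
    have := base.comp_sub_left r
    simpa using this.symm
  have key : ∀ x ∈ Set.Ioc (0:ℝ) r,
      (Real.sqrt (r^2 - x^2))⁻¹ ≤ (Real.sqrt r)⁻¹ * (r - x) ^ (-(1:ℝ)/2) := by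
    intro x hx
    have hx0 : 0 < x := hx.1
    have hxr : x ≤ r := hx.2
    have h1 : 0 ≤ r - x := by linarith
    have hrw : (Real.sqrt r)⁻¹ * (r - x) ^ (-(1:ℝ)/2) = (Real.sqrt (r * (r - x)))⁻¹ := by
      rw [show (-(1:ℝ)/2) = -(1/2) by norm_num, Real.rpow_neg h1, ← Real.sqrt_eq_rpow,
        Real.sqrt_mul hr.le, mul_inv]
    rw [hrw]
    rcases eq_or_lt_of_le hxr with h | h
    · simp [← h]
    · have hpos : 0 < r * (r - x) := mul_pos hr (by linarith)
      apply inv_anti₀ (Real.sqrt_pos.mpr hpos)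
      apply Real.sqrt_le_sqrt
      nlinarith
  have h0r : IntervalIntegrable (fun x : ℝ => (Real.sqrt (r^2 - x^2))⁻¹) volume 0 r := by
    apply IntervalIntegrable.mono_fun' (comp.const_mul ((Real.sqrt r)⁻¹)) (hmeas 0 r)
    filter_upwards [ae_restrict_mem measurableSet_uIoc] with x hx
    rw [Set.uIoc_of_le hr.le] at hx
    simpa [abs_of_nonneg (Real.sqrt_nonneg _)] using key x hx
  have hneg : IntervalIntegrable (fun x : ℝ => (Real.sqrt (r^2 - x^2))⁻¹) volume (-r) 0 := by
    have := (IntervalIntegrable.iff_comp_neg (by simp)).mp h0r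
    simp only [neg_zero] at this
    have heq : (fun x : ℝ => (Real.sqrt (r^2 - (-x)^2))⁻¹)
        = fun x : ℝ => (Real.sqrt (r^2 - x^2))⁻¹ := by
      funext x; rw [neg_pow]; norm_num
    rw [heq] at this
    exact this.symm
  exact hneg.trans h0r


lemma intInt_mul {r : ℝ} (hr : 0 < r) {h : ℝ → ℝ}
    (hh : ContinuousOn h (Set.uIcc (-r) r)) :
    IntervalIntegrable (fun x => h x * (Real.sqrt (r^2 - x^2))⁻¹) volume (-r) r :=
  (intInt_inv_sqrt hr).continuousOn_mul hh

lemma masterUnit {k : ℝ} (hk : |k| < 1) :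
    ∫ x in (-1:ℝ)..1, ((1 - k*x) * Real.sqrt (1 - x^2))⁻¹ = π / Real.sqrt (1 - k^2) := by
  have hk2 : k^2 < 1 := by nlinarith [abs_nonneg k, sq_abs k, abs_lt.mp hk]
  set s := Real.sqrt (1 - k^2) with hs_def
  have hs : 0 < s := Real.sqrt_pos.mpr (by linarith)
  have hs2 : s^2 = 1 - k^2 := Real.sq_sqrt (by linarith)
  set G : ℝ → ℝ := fun x => (2/s) * Real.arctan ((x/(1 + Real.sqrt (1 - x^2)) - k)/s) with hG_def
  have hGcont : Continuous G := by
    apply continuous_const.mul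
    apply Real.continuous_arctan.comp
    apply Continuous.div_const
    apply Continuous.sub _ continuous_const
    apply Continuous.div continuous_id
    · continuity
    · intro x
      have := Real.sqrt_nonneg (1 - x^2)
      positivity
  have hnz : ∀ x : ℝ, |x| ≤ 1 → 1 - k*x ≠ 0 := by
    intro x hx
    have : |k*x| < 1 := by
      rw [abs_mul]
      calc |k| * |x| ≤ |k| * 1 := by
            exact mul_le_mul_of_nonneg_left hx (abs_nonneg k)
        _ < 1 := by simpa using hk
    have := abs_lt.mp this
    linarith [this.1, this.2]
  have hderiv : ∀ x ∈ Set.Ioo (-1:ℝ) 1,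
      HasDerivAt G (((1 - k*x) * Real.sqrt (1 - x^2))⁻¹) x := by
    intro x hx
    have hx1 : -1 < x := hx.1
    have hx2 : x < 1 := hx.2
    have hx2pos : 0 < 1 - x^2 := by nlinarith
    set cX := Real.sqrt (1 - x^2) with hc_def
    have hc : 0 < cX := Real.sqrt_pos.mpr hx2pos
    have hc2 : cX^2 = 1 - x^2 := Real.sq_sqrt hx2pos.le
    have h1c : (0:ℝ) < 1 + cX := by linarith
    have hkx : 1 - k*x ≠ 0 := hnz x (by rw [abs_le]; constructor <;> linarith)
    -- derivative of sqrt(1 - x^2)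
    have hsq : HasDerivAt (fun y : ℝ => 1 - y^2) (-(2*x)) x := by
      simpa using ((hasDerivAt_pow 2 x).const_sub 1)
    have hsqrt : HasDerivAt (fun y : ℝ => Real.sqrt (1 - y^2)) (-(2*x) / (2 * cX)) x :=
      hsq.sqrt (by rw [← hc_def] at *; nlinarith)
    -- derivative of u = x / (1 + sqrt(1-x^2))
    have hu : HasDerivAt (fun y : ℝ => y/(1 + Real.sqrt (1 - y^2)))
        ((1 * (1 + cX) - x * (-(2*x) / (2 * cX))) / (1 + cX)^2) x := by
      exact (hasDerivAt_id x).div ((hsqrt.const_add 1)) (by positivity)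
    have hu' : (1 * (1 + cX) - x * (-(2*x) / (2 * cX))) / (1 + cX)^2
        = 1 / (cX * (1 + cX)) := by
      field_simp
      nlinarith [hc2]
    rw [hu'] at hu
    have harc : HasDerivAt G
        (2/s * ((1 + ((x/(1 + cX) - k)/s)^2)⁻¹ * ((1 + cX)⁻¹ * cX⁻¹ / s))) x := by
      apply HasDerivAt.const_mul
      have h := ((hu.sub_const k).div_const s).arctan
      simpa [← hc_def, div_div] using h
    convert harc using 1
    have hexp : (1 + ((x/(1 + cX) - k)/s)^2) = 2*(1 - k*x)/((1+cX)*s^2) := by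
      field_simp
      linear_combination (1 + cX)^2 * hs2 + hc2
    rw [hexp]
    field_simp [hkx, hc.ne', h1c.ne', hs.ne']
  have hint : IntervalIntegrable (fun x => ((1 - k*x) * Real.sqrt (1 - x^2))⁻¹) volume (-1) 1 := by
    have h := intInt_mul (r := 1) one_pos (h := fun x => (1 - k*x)⁻¹) ?_
    · have heq : (fun x : ℝ => (1 - k*x)⁻¹ * (Real.sqrt (1^2 - x^2))⁻¹)
          = fun x : ℝ => ((1 - k*x) * Real.sqrt (1 - x^2))⁻¹ := by
        funext x; rw [mul_inv]; norm_num
      rwa [heq] at h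
    · apply ContinuousOn.inv₀
      · exact (continuous_const.sub (continuous_const.mul continuous_id)).continuousOn
      · intro y hy
        rw [Set.uIcc_of_le (by norm_num : (-1:ℝ) ≤ 1)] at hy
        exact hnz y (abs_le.mpr ⟨hy.1, hy.2⟩)
  rw [integral_eq_sub_of_hasDerivAt_of_le (by norm_num) hGcont.continuousOn hderiv hint]
  have hG1 : G 1 = (2/s) * Real.arctan ((1 - k)/s) := by
    norm_num [hG_def]
  have hGm1 : G (-1) = -((2/s) * Real.arctan ((1 + k)/s)) := by
    have h9 : ((-1)/(1 + Real.sqrt (1 - (-1:ℝ)^2)) - k)/s = -((1+k)/s) := by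
      norm_num
      ring
    rw [hG_def]
    simp only [h9, Real.arctan_neg]
    ring
  rw [hG1, hGm1]
  have habs := abs_lt.mp hk
  have hv : (0:ℝ) < (1 - k)/s := div_pos (by linarith [habs.2]) hs
  have hvinv : (1 + k)/s = ((1 - k)/s)⁻¹ := by
    apply eq_inv_of_mul_eq_one_left
    rw [div_mul_div_comm, div_eq_one_iff_eq (by positivity)]
    linear_combination -hs2
  rw [hvinv, Real.arctan_inv_of_pos hv]
  ring

lemma masterInt {r t : ℝ} (hr : 0 < r) (ht : |t| * r < 1) :
    ∫ x in (-r)..r, ((1 - t*x) * Real.sqrt (r^2 - x^2))⁻¹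
      = π / Real.sqrt (1 - t^2*r^2) := by
  have hk : |t*r| < 1 := by
    rwa [abs_mul, abs_of_pos hr]
  have hsub := intervalIntegral.integral_comp_mul_left
      (fun x => ((1 - t*x) * Real.sqrt (r^2 - x^2))⁻¹) (a := -1) (b := 1) hr.ne'
  have heq : (fun u : ℝ => ((1 - t*(r*u)) * Real.sqrt (r^2 - (r*u)^2))⁻¹)
      = fun u : ℝ => r⁻¹ * ((1 - (t*r)*u) * Real.sqrt (1 - u^2))⁻¹ := by
    funext u
    have hs : Real.sqrt (r^2 - (r*u)^2) = r * Real.sqrt (1 - u^2) := by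
      rw [show r^2 - (r*u)^2 = r^2 * (1 - u^2) by ring, Real.sqrt_mul (sq_nonneg r),
        Real.sqrt_sq hr.le]
    rw [hs, show (1 - t*(r*u)) * (r * Real.sqrt (1 - u^2))
        = r * ((1 - (t*r)*u) * Real.sqrt (1 - u^2)) by ring, mul_inv]
  rw [heq, mul_neg_one, mul_one] at hsub
  have hmu := masterUnit hk
  rw [intervalIntegral.integral_const_mul, hmu, smul_eq_mul] at hsub
  have h2 : r⁻¹ * (π / Real.sqrt (1 - (t*r)^2))
      = r⁻¹ * ∫ x in (-r)..r, ((1 - t*x) * Real.sqrt (r^2 - x^2))⁻¹ := by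
    simpa using hsub
  have h3 := mul_left_cancel₀ (inv_ne_zero hr.ne') h2
  rw [← h3, show (t*r)^2 = t^2*r^2 by ring]


noncomputable def wfun (r c : ℝ) : ℝ → ℝ := fun x =>
  (1 + c * x) * (Real.sqrt (1 - r^2) / (Real.pi * (1 - x^2) * Real.sqrt (r^2 - x^2)))

lemma wfun_eq (r c : ℝ) : wfun r c = fun x =>
    ((1 + c * x) * Real.sqrt (1 - r^2) / (Real.pi * (1 - x^2))) * (Real.sqrt (r^2 - x^2))⁻¹ := by
  funext x
  simp only [wfun]
  rw [← div_div, div_eq_mul_inv]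
  ring

lemma wMeas (r c : ℝ) : Measurable (wfun r c) := by
  apply Measurable.mul
  · exact (continuous_const.add (continuous_const.mul continuous_id)).measurable
  · apply Measurable.div measurable_const
    exact ((continuous_const.mul (continuous_const.sub (continuous_pow 2))).mul
      (Real.continuous_sqrt.comp (by continuity))).measurable

lemma oneSubSq_ne {r x : ℝ} (hr1 : r < 1) (hx : |x| ≤ r) : (1 : ℝ) - x^2 ≠ 0 := by
  have h1 := abs_le.mp hx
  have : x^2 < 1 := by nlinarith [h1.1, h1.2]
  linarith

lemma wInt {r : ℝ} (c : ℝ) (hr0 : 0 < r) (hr1 : r < 1) :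
    IntervalIntegrable (wfun r c) volume (-r) r := by
  rw [wfun_eq]
  apply intInt_mul hr0
  apply ContinuousOn.div
  · exact ((continuous_const.add (continuous_const.mul continuous_id)).mul
      continuous_const).continuousOn
  · exact (continuous_const.mul (continuous_const.sub (continuous_pow 2))).continuousOn
  · intro x hx
    rw [Set.uIcc_of_le (by linarith : -r ≤ r)] at hx
    have hxr : |x| ≤ r := abs_le.mpr ⟨hx.1, hx.2⟩
    have := oneSubSq_ne hr1 hxr
    intro hcon
    apply this
    have hpi := Real.pi_ne_zero
    field_simp at hcon
    exact (mul_eq_zero.mp hcon).resolve_left hpi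

lemma hasSumStep {r c_ z : ℝ} (hr0 : 0 < r) (hr1 : r < 1) (hz : |z| < 1) :
    HasSum (fun n : ℕ => (∫ x in (-r)..r, x ^ n * wfun r c_ x) * z ^ n)
      (∫ x in (-r)..r, (1 - x*z)⁻¹ * wfun r c_ x) := by
  set q : ℝ := r * |z| with hq_def
  have hq0 : 0 ≤ q := mul_nonneg hr0.le (abs_nonneg z)
  have hq1 : q < 1 := by
    calc q ≤ r * 1 := mul_le_mul_of_nonneg_left hz.le hr0.le
      _ < 1 := by linarith
  have habs : ∀ t ∈ Set.uIoc (-r) r, |t| ≤ r := by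
    intro t ht
    rw [Set.uIoc_of_le (by linarith : -r ≤ r)] at ht
    exact abs_le.mpr ⟨ht.1.le, ht.2⟩
  have key := intervalIntegral.hasSum_integral_of_dominated_convergence
    (μ := volume) (a := -r) (b := r)
    (F := fun (n : ℕ) (t : ℝ) => t ^ n * wfun r c_ t * z ^ n)
    (f := fun t => (1 - t*z)⁻¹ * wfun r c_ t)
    (bound := fun (n : ℕ) (t : ℝ) => q ^ n * ‖wfun r c_ t‖)
    (fun n => (((measurable_id.pow_const n).mul (wMeas r c_)).mul_const _).aestronglyMeasurable)
    (fun n => Filter.Eventually.of_forall (fun t ht => by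
      have h1 : |t| ≤ r := habs t ht
      calc ‖t ^ n * wfun r c_ t * z ^ n‖ = |t|^n * |z|^n * ‖wfun r c_ t‖ := by
            simp [Real.norm_eq_abs, abs_mul, abs_pow]; ring
        _ ≤ r^n * |z|^n * ‖wfun r c_ t‖ := by
            have := pow_le_pow_left₀ (abs_nonneg t) h1 n
            have h2 : (0:ℝ) ≤ |z|^n := pow_nonneg (abs_nonneg z) n
            nlinarith [norm_nonneg (wfun r c_ t), mul_le_mul_of_nonneg_right this h2]
        _ = q ^ n * ‖wfun r c_ t‖ := by rw [hq_def, mul_pow]))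
    (Filter.Eventually.of_forall (fun t _ =>
      (summable_geometric_of_lt_one hq0 hq1).mul_right _))
    (by
      have heq : (fun t => ∑' (n : ℕ), q ^ n * ‖wfun r c_ t‖)
          = fun t => (1 - q)⁻¹ * ‖wfun r c_ t‖ := by
        funext t
        rw [tsum_mul_right, tsum_geometric_of_lt_one hq0 hq1, mul_comm]
      rw [heq]
      exact ((wInt c_ hr0 hr1).norm.const_mul _))
    (Filter.Eventually.of_forall (fun t ht => by
      have h1 : |t| ≤ r := habs t ht
      have htz : |t * z| < 1 := by
        rw [abs_mul]
        calc |t| * |z| ≤ r * |z| := mul_le_mul_of_nonneg_right h1 (abs_nonneg z)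
          _ < 1 := hq1
      have hg := (hasSum_geometric_of_abs_lt_one htz).mul_right (wfun r c_ t)
      have heq : (fun n : ℕ => (t*z)^n * wfun r c_ t)
          = fun n : ℕ => t ^ n * wfun r c_ t * z ^ n := by
        funext n; rw [mul_pow]; ring
      rwa [heq] at hg))
  have heq2 : (fun n : ℕ => (∫ x in (-r)..r, x ^ n * wfun r c_ x) * z ^ n)
      = fun n : ℕ => ∫ x in (-r)..r, x ^ n * wfun r c_ x * z ^ n := by
    funext n
    exact (intervalIntegral.integral_mul_const _ _).symm
  rw [heq2]
  exact key

set_option maxHeartbeats 2000000 in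
lemma evalInt {r c z : ℝ} (hr0 : 0 < r) (hr1 : r < 1) (hz : |z| < 1) :
    ∫ x in (-r)..r, (1 - x*z)⁻¹ * wfun r c x
      = ((1 - r^2 * z^2) * (1 + c * z)
            - (z + c) * z * Real.sqrt (1 - r^2) * Real.sqrt (1 - r^2 * z^2)) /
          ((1 - z^2) * (1 - r^2 * z^2)) := by
  have hzz := abs_lt.mp hz
  have hzr : |z| * r < 1 := by
    calc |z| * r ≤ 1 * r := mul_le_mul_of_nonneg_right hz.le hr0.le
      _ < 1 := by linarith
  have h1r : |(1:ℝ)| * r < 1 := by rw [abs_one, one_mul]; exact hr1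
  have hm1r : |(-1:ℝ)| * r < 1 := by rw [abs_neg, abs_one, one_mul]; exact hr1
  have hπ := Real.pi_ne_zero
  have hmz : (1:ℝ) - z ≠ 0 := by intro h; linarith [hzz.2, sub_eq_zero.mp h]
  have hpz : (1:ℝ) + z ≠ 0 := by intro h; nlinarith [hzz.1]
  have hz2 : (1:ℝ) - z^2 ≠ 0 := by
    intro h
    nlinarith [hzz.1, hzz.2]
  have hr2 : r^2 < 1 := by nlinarith
  have hrz2 : (0:ℝ) < 1 - r^2*z^2 := by nlinarith [hzz.1, hzz.2, sq_nonneg (r*z), sq_nonneg z]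
  have ha : 0 < Real.sqrt (1 - r^2) := Real.sqrt_pos.mpr (by linarith)
  have ha2 : Real.sqrt (1 - r^2)^2 = 1 - r^2 := Real.sq_sqrt (by linarith)
  have hb : 0 < Real.sqrt (1 - r^2*z^2) := Real.sqrt_pos.mpr hrz2
  have hb2 : Real.sqrt (1 - r^2*z^2)^2 = 1 - r^2*z^2 := Real.sq_sqrt hrz2.le
  have hlin : ∀ t x : ℝ, |t| * r < 1 → |x| ≤ r → 1 - t*x ≠ 0 := by
    intro t x ht hx
    have : |t*x| < 1 := by
      rw [abs_mul]
      calc |t| * |x| ≤ |t| * r := mul_le_mul_of_nonneg_left hx (abs_nonneg t)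
        _ < 1 := ht
    have h2 := abs_lt.mp this
    intro h
    nlinarith [h2.1, h2.2]
  have gInt : ∀ t : ℝ, |t| * r < 1 →
      IntervalIntegrable (fun x => ((1 - t*x) * Real.sqrt (r^2 - x^2))⁻¹) volume (-r) r := by
    intro t ht
    have hcont : ContinuousOn (fun x : ℝ => (1 - t*x)⁻¹) (Set.uIcc (-r) r) := by
      apply ContinuousOn.inv₀
      · exact (continuous_const.sub (continuous_const.mul continuous_id)).continuousOn
      · intro y hy
        rw [Set.uIcc_of_le (by linarith : -r ≤ r)] at hy
        exact hlin t y ht (abs_le.mpr ⟨hy.1, hy.2⟩)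
    have h := intInt_mul hr0 hcont
    have heq : (fun x : ℝ => (1 - t*x)⁻¹ * (Real.sqrt (r^2 - x^2))⁻¹)
        = fun x : ℝ => ((1 - t*x) * Real.sqrt (r^2 - x^2))⁻¹ := by
      funext x; rw [mul_inv]
    rwa [heq] at h
  have hpf : Set.EqOn (fun x => (1 - x*z)⁻¹ * wfun r c x)
      (fun x => Real.sqrt (1 - r^2) / π *
        ((-(z*(z+c))/(1-z^2)) * ((1 - z*x) * Real.sqrt (r^2 - x^2))⁻¹
          + ((1+c)/(2*(1-z))) * ((1 - 1*x) * Real.sqrt (r^2 - x^2))⁻¹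
          + ((1-c)/(2*(1+z))) * ((1 - (-1)*x) * Real.sqrt (r^2 - x^2))⁻¹))
      (Set.uIcc (-r) r) := by
    intro x hx
    rw [Set.uIcc_of_le (by linarith : -r ≤ r)] at hx
    have hxr : |x| ≤ r := abs_le.mpr ⟨hx.1, hx.2⟩
    have hxx := abs_le.mp hxr
    have hx1 : (1:ℝ) - x ≠ 0 := by intro h; nlinarith [sub_eq_zero.mp h]
    have hx1' : (1:ℝ) + x ≠ 0 := by intro h; nlinarith
    have hxz : (1:ℝ) - x*z ≠ 0 := by
      have := hlin z x hzr hxr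
      intro h; apply this; rw [← h]; ring
    have hzx : (1:ℝ) - z*x ≠ 0 := by
      intro h; apply hxz; rw [← h]; ring
    have hxsq : (1:ℝ) - x^2 ≠ 0 := oneSubSq_ne hr1 hxr
    by_cases hq : Real.sqrt (r^2 - x^2) = 0
    · simp only [wfun, hq, mul_zero, div_zero, inv_zero, zero_mul, mul_zero, add_zero]
    · simp only [wfun]
      simp only [one_mul, neg_one_mul, sub_neg_eq_add]
      field_simp
      ring
  rw [intervalIntegral.integral_congr hpf, intervalIntegral.integral_const_mul,
    intervalIntegral.integral_add (((gInt z hzr).const_mul _).add ((gInt 1 h1r).const_mul _))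
      ((gInt (-1) hm1r).const_mul _),
    intervalIntegral.integral_add ((gInt z hzr).const_mul _) ((gInt 1 h1r).const_mul _),
    intervalIntegral.integral_const_mul, intervalIntegral.integral_const_mul,
    intervalIntegral.integral_const_mul,
    masterInt hr0 hzr, masterInt hr0 h1r, masterInt hr0 hm1r,
    show (1:ℝ) - 1^2*r^2 = 1 - r^2 by ring, show (1:ℝ) - (-1:ℝ)^2*r^2 = 1 - r^2 by ring,
    show (1:ℝ) - z^2*r^2 = 1 - r^2*z^2 by ring]
  field_simp
  linear_combination 2 * Real.sqrt (1 - r^2) * z * (z + c) * (1 - z^2) * hb2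

theorem asymmetric_moment_generating_function (r c : ℝ) (hr0 : 0 < r) (hr1 : r < 1)
    (hc : c ∈ Set.Icc (-(1/r)) (1/r)) :
    ∃ ε > 0, ∀ z : ℝ, |z| < ε →
      HasSum (fun n : ℕ =>
          (∫ x in (-r)..r,
            x ^ n * ((1 + c * x) *
              (Real.sqrt (1 - r^2) / (Real.pi * (1 - x^2) * Real.sqrt (r^2 - x^2)))))
          * z ^ n)
        (((1 - r^2 * z^2) * (1 + c * z)
            - (z + c) * z * Real.sqrt (1 - r^2) * Real.sqrt (1 - r^2 * z^2)) /
          ((1 - z^2) * (1 - r^2 * z^2))) := by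
  refine ⟨1, one_pos, fun z hz => ?_⟩
  have h1 := hasSumStep (c_ := c) hr0 hr1 hz
  rw [evalInt hr0 hr1 hz] at h1
  simpa only [wfun] using h1
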